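/- If the infinite products ∏_{ν∈I} ‖φ_ν‖ and ∏_{ν∈I} ‖ψ_ν‖ both converge (to finite values), then the product ∏_{ν∈I} ⟨φ_ν, ψ_ν⟩ is quasi-convergent, i.e., ∏_{ν∈I} |⟨φ_ν, ψ_ν⟩| converges or equals zero. -/

import Mathlib

open scoped ComplexInnerProductSpace

/-- If `∏ ν, ‖φ ν‖` and `∏ ν, ‖ψ ν‖` both converge, then `∏ ν, ⟨φ ν, ψ ν⟩` is
quasi-convergent: the product of absolute values converges to a nonzero limit, or
converges to zero. -/
theorem quasiConvergent_of_multipliable {I : Type*} {H : I → Type*}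
    [∀ ν, NormedAddCommGroup (H ν)] [∀ ν, InnerProductSpace ℂ (H ν)]
    [∀ ν, CompleteSpace (H ν)] (φ ψ : ∀ ν, H ν)
    (hφ : Multipliable fun ν => ‖φ ν‖) (hψ : Multipliable fun ν => ‖ψ ν‖) :
    (∃ p : ℝ, p ≠ 0 ∧ HasProd (fun ν => ‖⟪φ ν, ψ ν⟫‖) p) ∨
      HasProd (fun ν => ‖⟪φ ν, ψ ν⟫‖) 0 := by
  classical
  set f : I → ℝ := fun ν => ‖⟪φ ν, ψ ν⟫‖ with hfdef
  set g : I → ℝ := fun ν => ‖φ ν‖ * ‖ψ ν‖ with hgdef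
  have hg0 : ∀ ν, 0 ≤ g ν := fun ν => mul_nonneg (norm_nonneg _) (norm_nonneg _)
  have hf0 : ∀ ν, 0 ≤ f ν := fun ν => norm_nonneg _
  have hfg : ∀ ν, f ν ≤ g ν := fun ν => norm_inner_le_norm _ _
  by_cases hzero : ∃ ν₀, f ν₀ = 0
  · right
    obtain ⟨ν₀, h0⟩ := hzero
    have : Filter.Tendsto (fun s : Finset I => ∏ ν ∈ s, f ν) Filter.atTop (nhds 0) := by
      refine Filter.Tendsto.congr' ?_ tendsto_const_nhds
      filter_upwards [Filter.eventually_ge_atTop ({ν₀} : Finset I)] with s hs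
      exact (Finset.prod_eq_zero (hs (Finset.mem_singleton_self ν₀)) h0).symm
    exact this
  push_neg at hzero
  have hfpos : ∀ ν, 0 < f ν := fun ν => (hf0 ν).lt_of_ne (Ne.symm (hzero ν))
  have hgpos : ∀ ν, 0 < g ν := fun ν => lt_of_lt_of_le (hfpos ν) (hfg ν)
  set h : I → ℝ := fun ν => f ν / g ν with hhdef
  have hh1 : ∀ ν, h ν ≤ 1 := fun ν => div_le_one_of_le₀ (hfg ν) (hg0 ν)
  have hh0 : ∀ ν, 0 ≤ h ν := fun ν => div_nonneg (hf0 ν) (hg0 ν)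
  have hanti : Antitone (fun s : Finset I => ∏ ν ∈ s, h ν) := by
    intro s t hst
    calc ∏ ν ∈ t, h ν = (∏ ν ∈ t \ s, h ν) * ∏ ν ∈ s, h ν := (Finset.prod_sdiff hst).symm
    _ ≤ 1 * ∏ ν ∈ s, h ν := by
        apply mul_le_mul_of_nonneg_right _ (Finset.prod_nonneg fun ν _ => hh0 ν)
        exact Finset.prod_le_one (fun ν _ => hh0 ν) (fun ν _ => hh1 ν)
    _ = ∏ ν ∈ s, h ν := one_mul _
  have hbdd : BddBelow (Set.range fun s : Finset I => ∏ ν ∈ s, h ν) := by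
    refine ⟨0, ?_⟩
    rintro x ⟨s, rfl⟩
    exact Finset.prod_nonneg fun ν _ => hh0 ν
  have hh : HasProd h (⨅ s : Finset I, ∏ ν ∈ s, h ν) := tendsto_atTop_ciInf hanti hbdd
  have hG : Multipliable g := hφ.mul hψ
  obtain ⟨a, ha⟩ := hG
  have hgh : (fun ν => g ν * h ν) = f := by
    funext ν
    have : g ν ≠ 0 := (hgpos ν).ne'
    show g ν * (f ν / g ν) = f ν
    field_simp [hhdef]
  have hF : HasProd f (a * ⨅ s : Finset I, ∏ ν ∈ s, h ν) := by
    have := ha.mul hh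
    rwa [hgh] at this
  by_cases hp : a * (⨅ s : Finset I, ∏ ν ∈ s, h ν) = 0
  · right; rwa [hp] at hF
  · exact Or.inl ⟨_, hp, hF⟩
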